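/- Let M be a regular matroid realized by a totally unimodular matrix A, let C* be a signed cocircuit of M, and let e be a non-loop element of the ground set. Then the restriction C*∖e (to coordinates other than e), if nonzero, can be written as a sum of signed cocircuits of M∖e with pairwise disjoint supports, each agreeing in sign with C*∖e on its support. -/

import Mathlib

open Matrix

/-- The support of a vector. -/
def supp {α : Type*} (v : α → ℝ) : Set α := {x | v x ≠ 0}

/-- A vector is simple if all entries lie in `{-1,0,1}`. -/
def Simple {α : Type*} (v : α → ℝ) : Prop := ∀ x, v x = -1 ∨ v x = 0 ∨ v x = 1

/-- A signed circuit of the regular matroid realized by `A`: a simple kernel vector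
with support minimal among supports of nonzero kernel vectors. -/
def SignedCircuit {m E : Type*} [Fintype E] (A : Matrix m E ℝ) (C : E → ℝ) : Prop :=
  A.mulVec C = 0 ∧ C ≠ 0 ∧ Simple C ∧
    ∀ D : E → ℝ, A.mulVec D = 0 → D ≠ 0 → supp D ⊆ supp C → supp D = supp C

/-- A signed cocircuit: a simple row-space vector with support minimal among
supports of nonzero row-space vectors. -/
def SignedCocircuit {m E : Type*} [Fintype m] (A : Matrix m E ℝ) (C : E → ℝ) : Prop :=
  (∃ y, Matrix.vecMul y A = C) ∧ C ≠ 0 ∧ Simple C ∧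
    ∀ D : E → ℝ, (∃ y, Matrix.vecMul y A = D) → D ≠ 0 → supp D ⊆ supp C → supp D = supp C

set_option linter.unusedSectionVars false

section Aux

variable {m F : Type*} [Fintype m] [Fintype F] [DecidableEq F]

lemma vecMul_apply' (y : m → ℝ) (B : Matrix m F ℝ) (x : F) :
    Matrix.vecMul y B x = ∑ i, y i * B i x := by
  simp [Matrix.vecMul, dotProduct]

lemma dual_row (B : Matrix m F ℝ) (f : Module.Dual ℝ (m → ℝ)) :
    ∃ y, Matrix.vecMul y B = fun x => f (fun i => B i x) := by
  classical
  refine ⟨fun i => f (fun i' => if i = i' then 1 else 0), ?_⟩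
  funext x
  rw [vecMul_apply']
  conv_rhs => rw [pi_eq_sum_univ (fun i => B i x), map_sum]
  refine Finset.sum_congr rfl fun i _ => ?_
  rw [_root_.map_smul]
  simp [mul_comm]

lemma exists_rows_isUnit {n : ℕ} (M : Matrix m (Fin n) ℝ)
    (hcols : LinearIndependent ℝ (fun j : Fin n => (fun i => M i j))) :
    ∃ R : Fin n → m, Function.Injective R ∧ IsUnit (M.submatrix R id) := by
  classical
  -- rows of M span everything
  have hspan : Submodule.span ℝ (Set.range (fun i : m => M i)) = ⊤ := by
    by_contra h
    obtain ⟨φ, hφ0, hφmap⟩ :=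
      Submodule.exists_dual_map_eq_bot_of_lt_top (lt_top_iff_ne_top.mpr h) inferInstance
    set c : Fin n → ℝ := fun j => φ (fun j' => if j = j' then 1 else 0) with hc
    have hφv : ∀ v : Fin n → ℝ, φ v = ∑ j, v j * c j := by
      intro v
      conv_lhs => rw [pi_eq_sum_univ v, map_sum]
      refine Finset.sum_congr rfl fun j _ => ?_
      rw [_root_.map_smul]; simp [hc]
    have hrow : ∀ i, ∑ j, M i j * c j = 0 := by
      intro i
      rw [← hφv]
      have : φ (M i) ∈ Submodule.map φ (Submodule.span ℝ (Set.range (fun i : m => M i))) :=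
        Submodule.mem_map_of_mem (Submodule.subset_span (Set.mem_range_self i))
      rw [hφmap] at this
      simpa using this
    have hc0 : c = 0 := by
      have := Fintype.linearIndependent_iff.mp hcols c ?_
      · funext j; exact this j
      · funext i
        simpa [Finset.sum_apply, mul_comm] using hrow i
    exact hφ0 (by ext v; simp [hφv, hc0])
  obtain ⟨b, hbsub, hbspan, hbind⟩ :=
    exists_linearIndependent ℝ (Set.range (fun i : m => M i))
  rw [hspan] at hbspan
  have hbfin : b.Finite := hbind.setFinite
  letI := hbfin.fintype
  have hb : Fintype.card b = n := by
    have hbasis : Module.Basis b ℝ (Fin n → ℝ) :=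
      Module.Basis.mk hbind (by rw [Subtype.range_coe, hbspan])
    have h1 := Module.finrank_eq_card_basis hbasis
    have h2 : Module.finrank ℝ (Fin n → ℝ) = n := by simp
    omega
  let e : Fin n ≃ b := (Fintype.equivFinOfCardEq hb).symm
  have hRex : ∀ j : Fin n, ∃ i : m, M i = (e j : Fin n → ℝ) := fun j => hbsub (e j).2
  choose R hR using hRex
  refine ⟨R, ?_, ?_⟩
  · intro j1 j2 h
    apply e.injective
    apply Subtype.ext
    rw [← hR j1, ← hR j2, h]
  · rw [← Matrix.linearIndependent_rows_iff_isUnit (K := ℝ)]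
    have heq : (fun j => (M.submatrix R id) j) = fun j => (e j : Fin n → ℝ) := by
      funext j; ext j'; simp [Matrix.submatrix_apply, hR j]
    show LinearIndependent ℝ (fun j => (M.submatrix R id) j)
    rw [heq]
    exact hbind.comp e e.injective

set_option maxHeartbeats 1000000 in
lemma elementary_primitive {B : Matrix m F ℝ} (hB : B.IsTotallyUnimodular)
    {w : F → ℝ} (hw : ∃ y, Matrix.vecMul y B = w) (hw0 : w ≠ 0)
    (hmin : ∀ z : F → ℝ, (∃ y, Matrix.vecMul y B = z) → z ≠ 0 → supp z ⊆ supp w →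
      supp z = supp w) :
    ∃ α : ℝ, α ≠ 0 ∧ Simple (α • w) := by
  classical
  obtain ⟨y, hy⟩ := hw
  obtain ⟨x0, hx0⟩ : ∃ x0, w x0 ≠ 0 := Function.ne_iff.mp hw0
  set cols : F → (m → ℝ) := fun x => (fun i => B i x) with hcols
  have hwcol : ∀ x, w x = ∑ i, y i * B i x := fun x => by rw [← hy, vecMul_apply']
  set U : Submodule ℝ (m → ℝ) :=
    Submodule.span ℝ (cols '' {x | w x = 0} ∪ {cols x0}) with hU
  -- every column lies in U
  have hUcol : ∀ x, cols x ∈ U := by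
    intro x
    by_cases hx : w x = 0
    · exact Submodule.subset_span (Or.inl ⟨x, hx, rfl⟩)
    by_contra hmem
    obtain ⟨f, hfx, hfmap⟩ :=
      Submodule.exists_dual_map_eq_bot_of_notMem hmem inferInstance
    have hker : ∀ u ∈ U, f u = 0 := by
      intro u hu
      have : f u ∈ Submodule.map f U := Submodule.mem_map_of_mem hu
      rw [hfmap] at this; simpa using this
    obtain ⟨yz, hz⟩ := dual_row B f
    set z : F → ℝ := fun x' => f (cols x') with hzdef
    have hzsupp : supp z ⊆ supp w := by
      intro x' hx'
      simp only [supp, Set.mem_setOf_eq] at hx' ⊢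
      intro hwx'
      exact hx' (hker _ (Submodule.subset_span (Or.inl ⟨x', hwx', rfl⟩)))
    have hzne : z ≠ 0 := by
      intro h
      exact hfx (by simpa [hzdef] using congrFun h x)
    have hsz := hmin z ⟨yz, hz⟩ hzne hzsupp
    have hx0z : z x0 ≠ 0 := by
      have : x0 ∈ supp z := by rw [hsz]; exact hx0
      exact this
    exact hx0z (hker _ (Submodule.subset_span (Or.inr rfl)))
  -- x0's column is not spanned by the zero-support columns
  have hx0span : cols x0 ∉ Submodule.span ℝ (cols '' {x | w x = 0}) := by
    intro hmem
    let Φ : (m → ℝ) →ₗ[ℝ] ℝ :=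
      { toFun := fun v => ∑ i, y i * v i
        map_add' := by intros; simp [mul_add, Finset.sum_add_distrib]
        map_smul' := by
          intro c v; simp only [Pi.smul_apply, smul_eq_mul, RingHom.id_apply,
            Finset.mul_sum]; ring_nf
          exact Finset.sum_congr rfl fun i _ => by ring }
    have hΦcol : ∀ t, Φ (cols t) = w t := fun t => (hwcol t).symm
    have hle : Submodule.span ℝ (cols '' {x | w x = 0}) ≤ LinearMap.ker Φ := by
      rw [Submodule.span_le]
      rintro _ ⟨t, ht, rfl⟩
      simp only [SetLike.mem_coe, LinearMap.mem_ker, hΦcol]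
      exact ht
    have := hle hmem
    rw [LinearMap.mem_ker, hΦcol] at this
    exact hx0 this
  -- extract a basis of U from the generating set
  obtain ⟨b, hbsub, hbspan, hbind⟩ :=
    exists_linearIndependent ℝ (cols '' {x | w x = 0} ∪ {cols x0})
  have hbU : Submodule.span ℝ b = U := hbspan
  have hx0b : cols x0 ∈ b := by
    by_contra h
    have hsub : b ⊆ cols '' {x | w x = 0} := by
      intro u hu
      rcases hbsub hu with h' | h'
      · exact h'
      · exact absurd (h' ▸ hu) h
    exact hx0span ((Submodule.span_mono hsub) (hbU ▸ hUcol x0))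
  have hbfin : b.Finite := hbind.setFinite
  letI := hbfin.fintype
  set n := Fintype.card b with hn
  let e : Fin n ≃ b := (Fintype.equivFin ↥b).symm
  let j0 : Fin n := e.symm ⟨cols x0, hx0b⟩
  have hgex : ∀ j : Fin n, j ≠ j0 → ∃ t, w t = 0 ∧ cols t = (e j : m → ℝ) := by
    intro j hj
    rcases hbsub (e j).2 with h' | h'
    · obtain ⟨t, ht, hct⟩ := h'
      exact ⟨t, ht, hct⟩
    · exfalso
      apply hj
      have hej : e j = (⟨cols x0, hx0b⟩ : b) := Subtype.ext h'
      rw [← e.symm_apply_apply j, hej]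
  choose g0 hg0w hg0c using hgex
  set g : Fin n → F := fun j => if h : j = j0 then x0 else g0 j h with hg
  have hgj0 : g j0 = x0 := by simp [hg]
  have hcolsg : ∀ j, cols (g j) = (e j : m → ℝ) := by
    intro j
    by_cases h : j = j0
    · subst h
      simp only [hgj0, j0, Equiv.apply_symm_apply]
    · simp [hg, h, hg0c j h]
  have hwg : ∀ j, j ≠ j0 → w (g j) = 0 := by
    intro j h; simp [hg, h, hg0w j h]
  have hind : LinearIndependent ℝ (fun j => cols (g j)) := by
    have : (fun j => cols (g j)) = fun j => ((e j : m → ℝ)) := funext hcolsg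
    rw [this]
    exact hbind.comp e e.injective
  have hginj : Function.Injective g := by
    intro j1 j2 h
    exact hind.injective (by simp only [h])
  have hspanU : ∀ x, cols x ∈ Submodule.span ℝ (Set.range fun j => cols (g j)) := by
    intro x
    have hrange : (Set.range fun j => cols (g j)) = b := by
      rw [funext hcolsg]
      ext u
      constructor
      · rintro ⟨j, rfl⟩; exact (e j).2
      · intro hu; exact ⟨e.symm ⟨u, hu⟩, by simp⟩
    rw [hrange, hbU]
    exact hUcol x
  -- select rows
  obtain ⟨R, hRinj, hRunit⟩ := exists_rows_isUnit (B.submatrix id g)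
    (by exact hind)
  rw [Matrix.submatrix_submatrix] at hRunit
  simp only [Function.comp_id, Function.id_comp] at hRunit
  set N := B.submatrix R g with hN
  have hne : N.det ≠ 0 := ((Matrix.isUnit_iff_isUnit_det N).mp hRunit).ne_zero
  have hdetN : N.det = 1 ∨ N.det = -1 := by
    obtain ⟨s, hs⟩ := hB n R g hRinj hginj
    rcases s with _ | _ | _
    · exact absurd hs.symm hne
    · right; exact hs.symm
    · left; exact hs.symm
  -- the main computation
  refine ⟨(w x0)⁻¹, inv_ne_zero hx0, ?_⟩
  intro x
  by_cases hx : w x = 0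
  · right; left; simp [hx]
  obtain ⟨c, hc⟩ := Submodule.mem_span_range_iff_exists_fun ℝ |>.mp (hspanU x)
  -- (a) w x = c j0 * w x0
  have hwx : w x = c j0 * w x0 := by
    have hBx : ∀ i, B i x = ∑ j, c j * B i (g j) := by
      intro i
      have := congrFun hc i
      simpa [Finset.sum_apply, cols] using this.symm
    calc w x = ∑ i, y i * B i x := hwcol x
    _ = ∑ i, y i * ∑ j, c j * B i (g j) := by simp_rw [← hBx]
    _ = ∑ i, ∑ j, y i * (c j * B i (g j)) := by simp_rw [Finset.mul_sum]
    _ = ∑ j, ∑ i, y i * (c j * B i (g j)) := Finset.sum_comm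
    _ = ∑ j, c j * ∑ i, y i * B i (g j) := by
        refine Finset.sum_congr rfl fun j _ => ?_
        rw [Finset.mul_sum]
        exact Finset.sum_congr rfl fun i _ => by ring
    _ = ∑ j, c j * w (g j) := by simp_rw [← hwcol]
    _ = c j0 * w (g j0) := by
        refine Finset.sum_eq_single j0 (fun j _ hj => by rw [hwg j hj, mul_zero]) ?_
        intro h; exact absurd (Finset.mem_univ j0) h
    _ = c j0 * w x0 := by rw [hgj0]
  -- (b) Cramer
  set bb : Fin n → ℝ := fun i => B (R i) x with hbb
  have hNc : N.mulVec c = bb := by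
    funext i
    have := congrFun hc (R i)
    simp only [Finset.sum_apply, Pi.smul_apply, smul_eq_mul, cols] at this
    simp only [Matrix.mulVec, dotProduct, hN, Matrix.submatrix_apply, hbb]
    rw [← this]
    exact Finset.sum_congr rfl fun j _ => by ring
  have hcram : Matrix.cramer N bb = N.det • c := by
    apply (Matrix.mulVec_injective_iff_isUnit.mpr hRunit)
    rw [Matrix.mulVec_cramer, Matrix.mulVec_smul, hNc]
  have hupd : Matrix.updateCol N j0 bb = B.submatrix R (Function.update g j0 x) := by
    ext i j
    rw [Matrix.updateCol_apply, Matrix.submatrix_apply, Function.update_apply]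
    split <;> simp [hN, hbb, Matrix.submatrix_apply]
  have hupdinj : Function.Injective (Function.update g j0 x) := by
    intro j1 j2 h
    by_cases h1 : j1 = j0 <;> by_cases h2 : j2 = j0
    · rw [h1, h2]
    · exfalso
      rw [h1, Function.update_self, Function.update_of_ne h2] at h
      exact hx (by rw [h]; exact hwg j2 h2)
    · exfalso
      rw [h2, Function.update_self, Function.update_of_ne h1] at h
      exact hx (by rw [← h]; exact hwg j1 h1)
    · rw [Function.update_of_ne h1, Function.update_of_ne h2] at h
      exact hginj h
  have hdetU : ∃ s : SignType, (s : ℝ) = (Matrix.updateCol N j0 bb).det := by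
    rw [hupd]
    exact hB n R (Function.update g j0 x) hRinj hupdinj
  have hkey : (Matrix.updateCol N j0 bb).det = N.det * c j0 := by
    have h := congrFun hcram j0
    rw [Matrix.cramer_apply] at h
    simpa using h
  have hd : (Matrix.updateCol N j0 bb).det = -1 ∨ (Matrix.updateCol N j0 bb).det = 0 ∨
      (Matrix.updateCol N j0 bb).det = 1 := by
    obtain ⟨s, hs⟩ := hdetU
    rcases s with _ | _ | _
    · right; left; exact hs.symm
    · left; exact hs.symm
    · right; right; exact hs.symm
  have hcj0 : c j0 = -1 ∨ c j0 = 0 ∨ c j0 = 1 := by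
    rcases hdetN with h1 | h1 <;> rw [h1] at hkey <;> rcases hd with h2 | h2 | h2 <;>
      rw [h2] at hkey <;>
      first
        | (left; linarith)
        | (right; left; linarith)
        | (right; right; linarith)
  have hval : ((w x0)⁻¹ • w) x = c j0 := by
    simp only [Pi.smul_apply, smul_eq_mul, hwx]
    rw [mul_comm (c j0) (w x0), inv_mul_cancel_left₀ hx0]
  rw [hval]
  exact hcj0

lemma exists_conformal_cocircuit {B : Matrix m F ℝ} (hB : B.IsTotallyUnimodular) :
    ∀ k : ℕ, ∀ v : F → ℝ, (supp v).ncard ≤ k → (∃ y, Matrix.vecMul y B = v) → v ≠ 0 →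
    ∃ c, SignedCocircuit B c ∧ supp c ⊆ supp v ∧ ∀ x ∈ supp c, 0 < c x * v x := by
  intro k
  induction k with
  | zero =>
    intro v hcard hrow hne
    exfalso
    obtain ⟨x, hx⟩ := Function.ne_iff.mp hne
    have hxs : x ∈ supp v := hx
    have : (supp v).ncard = 0 := Nat.le_zero.mp hcard
    rw [Set.ncard_eq_zero (Set.toFinite _)] at this
    rw [this] at hxs
    exact hxs
  | succ k ih =>
    intro v hcard hrow hne
    classical
    -- pick a support-minimal nonzero row-space vector inside supp v
    have hex : ∃ kk : ℕ, ∃ z : F → ℝ,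
        ((∃ y, Matrix.vecMul y B = z) ∧ z ≠ 0 ∧ supp z ⊆ supp v) ∧ (supp z).ncard = kk :=
      ⟨(supp v).ncard, v, ⟨hrow, hne, subset_rfl⟩, rfl⟩
    obtain ⟨w, ⟨hwrow, hwne, hwsub⟩, hwcard⟩ := Nat.find_spec hex
    have hwmin : ∀ z : F → ℝ, (∃ y, Matrix.vecMul y B = z) → z ≠ 0 → supp z ⊆ supp v →
        (supp w).ncard ≤ (supp z).ncard := by
      intro z h1 h2 h3
      rw [hwcard]
      exact Nat.find_min' hex ⟨z, ⟨h1, h2, h3⟩, rfl⟩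
    have hmin : ∀ z : F → ℝ, (∃ y, Matrix.vecMul y B = z) → z ≠ 0 → supp z ⊆ supp w →
        supp z = supp w := by
      intro z h1 h2 h3
      exact Set.eq_of_subset_of_ncard_le h3
        (hwmin z h1 h2 (h3.trans hwsub)) (Set.toFinite _)
    obtain ⟨α, hα, hαsimple⟩ := elementary_primitive hB hwrow hwne hmin
    set c0 : F → ℝ := α • w with hc0
    have hc0supp : supp c0 = supp w := by
      ext x
      simp only [supp, Set.mem_setOf_eq, hc0, Pi.smul_apply, smul_eq_mul]
      constructor
      · intro h hw0; exact h (by rw [hw0, mul_zero])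
      · intro h; exact mul_ne_zero hα h
    have hc0row : ∃ y, Matrix.vecMul y B = c0 := by
      obtain ⟨y, hy⟩ := hwrow
      exact ⟨α • y, by rw [Matrix.smul_vecMul, hy]⟩
    have hc0ne : c0 ≠ 0 := by
      intro h
      obtain ⟨x, hx⟩ := Function.ne_iff.mp hwne
      have : x ∈ supp c0 := by rw [hc0supp]; exact hx
      rw [h] at this
      exact this rfl
    have hc0circ : SignedCocircuit B c0 := by
      refine ⟨hc0row, hc0ne, hαsimple, fun D h1 h2 h3 => ?_⟩
      rw [hc0supp] at h3 ⊢
      exact hmin D h1 h2 h3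
    have hnegcirc : SignedCocircuit B (-c0) := by
      refine ⟨?_, ?_, ?_, ?_⟩
      · obtain ⟨y, hy⟩ := hc0row
        exact ⟨-y, by rw [Matrix.neg_vecMul, hy]⟩
      · intro h; exact hc0ne (by rw [← neg_neg c0, h, neg_zero])
      · intro x
        rcases hαsimple x with h | h | h
        · right; right; simp [h]
        · right; left; simp [h]
        · left; simp [h]
      · intro D h1 h2 h3
        have hsuppneg : supp (-c0) = supp c0 := by
          ext x; simp [supp]
        rw [hsuppneg] at h3 ⊢
        rw [hc0supp] at h3 ⊢
        exact hmin D h1 h2 h3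
    -- sign analysis
    have htri : ∀ x ∈ supp c0, 0 < c0 x * v x ∨ c0 x * v x < 0 := by
      intro x hx
      have hvx : v x ≠ 0 := hwsub (hc0supp ▸ hx)
      have hcx : c0 x ≠ 0 := hx
      rcases lt_trichotomy (c0 x * v x) 0 with h | h | h
      · right; exact h
      · exact absurd (mul_eq_zero.mp h) (by push_neg; exact ⟨hcx, hvx⟩)
      · left; exact h
    by_cases hneg : ∃ x, x ∈ supp c0 ∧ c0 x * v x < 0
    · by_cases hpos : ∃ x, x ∈ supp c0 ∧ 0 < c0 x * v x
      · -- mixed signs: reduce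
        obtain ⟨x2, hx2s, hx2⟩ := hpos
        obtain ⟨x1, hx1s, hx1⟩ := hneg
        set T : Finset F := Finset.univ.filter (fun x => 0 < c0 x * v x) with hT
        have hx2T : x2 ∈ T := by simp [hT, hx2]
        have hTne : T.Nonempty := ⟨x2, hx2T⟩
        have hTsub : ∀ x ∈ T, 0 < c0 x * v x := by
          intro x hxT; simp [hT] at hxT; exact hxT
        set lam : ℝ := T.inf' hTne (fun x => v x / c0 x) with hlam
        have hlampos : 0 < lam := by
          rw [hlam, Finset.lt_inf'_iff]
          intro x hxT
          rw [div_pos_iff]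
          rcases mul_pos_iff.mp (hTsub x hxT) with ⟨h1, h2⟩ | ⟨h1, h2⟩
          · left; exact ⟨h2, h1⟩
          · right; exact ⟨h2, h1⟩
        set v' : F → ℝ := v - lam • c0 with hv'
        have hv'x : ∀ x, v' x = v x - lam * c0 x := fun x => rfl
        have hv'row : ∃ y, Matrix.vecMul y B = v' := by
          obtain ⟨y, hy⟩ := hrow
          obtain ⟨y0, hy0⟩ := hc0row
          exact ⟨y - lam • y0, by rw [Matrix.sub_vecMul, Matrix.smul_vecMul, hy, hy0]⟩
        have hsubv : supp v' ⊆ supp v := by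
          intro x hx
          simp only [supp, Set.mem_setOf_eq] at hx ⊢
          intro hvx
          apply hx
          have hcx : c0 x = 0 := by
            by_contra hcx
            exact (hwsub (hc0supp ▸ (hcx : x ∈ supp c0))) hvx
          rw [hv'x, hvx, hcx, mul_zero, sub_zero]
        obtain ⟨xmin, hxminT, hxminval⟩ := Finset.exists_mem_eq_inf' hTne (fun x => v x / c0 x)
        have hxminc : c0 xmin ≠ 0 := by
          intro h
          have := hTsub xmin hxminT
          rw [h, zero_mul] at this
          exact lt_irrefl 0 this
        have hxminv : v xmin ≠ 0 := by
          intro h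
          have := hTsub xmin hxminT
          rw [h, mul_zero] at this
          exact lt_irrefl 0 this
        have hlamval : lam = v xmin / c0 xmin := hlam.trans hxminval
        have hv'xmin : v' xmin = 0 := by
          rw [hv'x, hlamval]
          field_simp
          ring
        have hssub : supp v' ⊂ supp v := by
          refine ⟨hsubv, fun hsup => ?_⟩
          have : xmin ∈ supp v' := hsup hxminv
          exact this hv'xmin
        have hcard' : (supp v').ncard ≤ k := by
          have := Set.ncard_lt_ncard hssub (Set.toFinite _)
          omega
        have hkey : ∀ x, v' x ≠ 0 → 0 < v' x * v x := by
          intro x hx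
          have hvx : v x ≠ 0 := hsubv hx
          by_cases hcx : c0 x = 0
          · rw [hv'x, hcx, mul_zero, sub_zero]
            exact mul_self_pos.mpr hvx
          · have hxc0 : x ∈ supp c0 := hcx
            rcases htri x hxc0 with hp | hn
            · -- positive case: lam < v x / c0 x strictly
              have hxT : x ∈ T := by simp [hT, hp]
              have hle : lam ≤ v x / c0 x := by
                rw [hlam]
                exact Finset.inf'_le _ hxT
              have hlt : lam < v x / c0 x := by
                refine lt_of_le_of_ne hle fun hcontra => ?_
                apply hx
                rw [hv'x, hcontra]
                field_simp
                ring
              have heq : (v x / c0 x - lam) * (c0 x * v x) = v' x * v x := by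
                rw [hv'x]
                field_simp
              rw [← heq]
              exact mul_pos (by linarith) hp
            · -- negative case
              rw [hv'x]
              nlinarith [mul_pos hlampos (neg_pos.mpr hn), mul_self_pos.mpr hvx]
        have hv'ne : v' ≠ 0 := by
          intro h0
          have h1 : v' x1 = 0 := by rw [h0]; rfl
          rw [hv'x] at h1
          have hveq : v x1 = lam * c0 x1 := by linarith
          rw [hveq] at hx1
          nlinarith [sq_nonneg (c0 x1)]
        obtain ⟨c, hcirc, hcsub, hcconf⟩ := ih v' hcard' hv'row hv'ne
        refine ⟨c, hcirc, hcsub.trans hsubv, ?_⟩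
        intro x hxc
        have h1 := hcconf x hxc
        have hv'xne : v' x ≠ 0 := by
          intro h
          rw [h, mul_zero] at h1
          exact lt_irrefl 0 h1
        have h2 := hkey x hv'xne
        by_contra hcon
        push_neg at hcon
        nlinarith [mul_pos h1 h2, sq_nonneg (v' x)]
      · -- all nonpositive: use -c0
        push_neg at hpos
        refine ⟨-c0, hnegcirc, ?_, ?_⟩
        · intro x hx
          have : x ∈ supp c0 := by
            simp only [supp, Set.mem_setOf_eq, Pi.neg_apply, neg_ne_zero] at hx ⊢
            exact hx
          exact hwsub (hc0supp ▸ this)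
        · intro x hx
          have hxc : x ∈ supp c0 := by
            simp only [supp, Set.mem_setOf_eq, Pi.neg_apply, neg_ne_zero] at hx ⊢
            exact hx
          have hnp := hpos x hxc
          rcases htri x hxc with h | h
          · exact absurd h (not_lt.mpr hnp)
          · simp only [Pi.neg_apply, neg_mul]
            linarith
    · -- all nonnegative: use c0
      push_neg at hneg
      refine ⟨c0, hc0circ, by rw [hc0supp]; exact hwsub, ?_⟩
      intro x hx
      rcases htri x hx with h | h
      · exact h
      · exact absurd h (not_lt.mpr (hneg x hx))

lemma tu_decomposition {B : Matrix m F ℝ} (hB : B.IsTotallyUnimodular) :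
    ∀ k : ℕ, ∀ v : F → ℝ, (supp v).ncard ≤ k → Simple v → (∃ y, Matrix.vecMul y B = v) →
      v ≠ 0 →
    ∃ (n : ℕ) (c : Fin n → (F → ℝ)),
      (∀ i, SignedCocircuit B (c i)) ∧
      (Pairwise fun i j => supp (c i) ∩ supp (c j) = ∅) ∧
      (∀ i, ∀ x ∈ supp (c i), c i x = v x) ∧
      v = ∑ i, c i := by
  intro k
  induction k with
  | zero =>
    intro v hcard hsimp hrow hne
    exfalso
    obtain ⟨x, hx⟩ := Function.ne_iff.mp hne
    have hxs : x ∈ supp v := hx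
    rw [Set.ncard_eq_zero (Set.toFinite _) |>.mp (Nat.le_zero.mp hcard)] at hxs
    exact hxs
  | succ k ih =>
    intro v hcard hsimp hrow hne
    obtain ⟨c0, hc0circ, hc0sub, hc0conf⟩ :=
      exists_conformal_cocircuit hB ((supp v).ncard) v le_rfl hrow hne
    obtain ⟨hc0row, hc0ne, hc0simp, hc0min⟩ := id hc0circ
    have heq : ∀ x ∈ supp c0, c0 x = v x := by
      intro x hx
      have hpos := hc0conf x hx
      rcases hc0simp x with h1 | h1 | h1 <;> rcases hsimp x with h2 | h2 | h2 <;>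
        rw [h1, h2] at hpos ⊢ <;> norm_num at hpos
    set v' : F → ℝ := v - c0 with hv'
    have hv'x : ∀ x, v' x = v x - c0 x := fun _ => rfl
    have hv'supp : ∀ x ∈ supp c0, v' x = 0 := by
      intro x hx
      rw [hv'x, heq x hx, sub_self]
    have hv'out : ∀ x, x ∉ supp c0 → v' x = v x := by
      intro x hx
      have : c0 x = 0 := not_not.mp hx
      rw [hv'x, this, sub_zero]
    have hdisj : supp v' ∩ supp c0 = ∅ := by
      ext x
      simp only [Set.mem_inter_iff, Set.mem_empty_iff_false, iff_false, not_and]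
      intro hx1 hx2
      exact hx1 (hv'supp x hx2)
    have hv'sub : supp v' ⊆ supp v := by
      intro x hx
      by_cases h : x ∈ supp c0
      · exact absurd (hv'supp x h) hx
      · rw [supp, Set.mem_setOf_eq, ← hv'out x h]; exact hx
    by_cases h0 : v' = 0
    · refine ⟨1, fun _ => c0, fun _ => hc0circ, ?_, ?_, ?_⟩
      · intro i j hij
        exact absurd (Subsingleton.elim i j) hij
      · intro _ x hx
        exact heq x hx
      · have : v = c0 := by
          have := sub_eq_zero.mp (hv' ▸ h0)
          exact this
        rw [this]
        simp
    · have hsimp' : Simple v' := by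
        intro x
        by_cases h : x ∈ supp c0
        · right; left; exact hv'supp x h
        · rw [hv'out x h]; exact hsimp x
      have hrow' : ∃ y, Matrix.vecMul y B = v' := by
        obtain ⟨y, hy⟩ := hrow
        obtain ⟨y0, hy0⟩ := hc0row
        exact ⟨y - y0, by rw [Matrix.sub_vecMul, hy, hy0]⟩
      have hcard' : (supp v').ncard ≤ k := by
        obtain ⟨x0, hx0⟩ := Function.ne_iff.mp hc0ne
        have hssub : supp v' ⊂ supp v := by
          refine ⟨hv'sub, fun hcon => ?_⟩
          have hx0v : x0 ∈ supp v := hc0sub hx0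
          have : x0 ∈ supp v' := hcon hx0v
          exact this (hv'supp x0 hx0)
        have := Set.ncard_lt_ncard hssub (Set.toFinite _)
        omega
      obtain ⟨n', c', hcirc', hpair', hconf', hsum'⟩ := ih v' hcard' hsimp' hrow' h0
      have hsub' : ∀ i, supp (c' i) ⊆ supp v' := by
        intro i x hx
        rw [supp, Set.mem_setOf_eq, ← hconf' i x hx]
        exact hx
      refine ⟨n' + 1, Fin.cons c0 c', ?_, ?_, ?_, ?_⟩
      · intro i
        refine Fin.cases ?_ ?_ i
        · simpa using hc0circ
        · intro j; simpa using hcirc' j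
      · have hd0 : ∀ j, supp c0 ∩ supp (c' j) = ∅ := by
          intro j
          ext x
          simp only [Set.mem_inter_iff, Set.mem_empty_iff_false, iff_false, not_and]
          intro hx1 hx2
          have : x ∈ supp v' := hsub' j hx2
          exact this (hv'supp x hx1)
        intro i j hij
        rcases Fin.eq_zero_or_eq_succ i with rfl | ⟨i', rfl⟩ <;>
          rcases Fin.eq_zero_or_eq_succ j with rfl | ⟨j', rfl⟩
        · exact absurd rfl hij
        · simpa only [Fin.cons_zero, Fin.cons_succ] using hd0 j'
        · rw [Set.inter_comm]
          simpa only [Fin.cons_zero, Fin.cons_succ] using hd0 i'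
        · have hij' : i' ≠ j' := fun h => hij (by rw [h])
          simpa only [Fin.cons_succ] using hpair' hij'
      · intro i
        refine Fin.cases ?_ ?_ i
        · intro x hx; simpa using heq x (by simpa using hx)
        · intro j x hx
          simp only [Fin.cons_succ] at hx ⊢
          have h1 : c' j x = v' x := hconf' j x hx
          have h2 : x ∈ supp v' := hsub' j hx
          have h3 : x ∉ supp c0 := by
            intro hc
            exact h2 (hv'supp x hc)
          rw [h1, hv'out x h3]
      · rw [Fin.sum_cons, ← hsum', hv']
        ring

end Aux

theorem cocircuit_restriction_decomposes_in_deletion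
    {m E : Type*} [Fintype m] [Fintype E] [DecidableEq E] (A : Matrix m E ℝ)
    (hA : A.IsTotallyUnimodular) (D : E → ℝ) (hD : SignedCocircuit A D)
    (e : E) (hloop : (fun i => A i e) ≠ 0)
    (hne : (fun x : {x : E // x ≠ e} => D x.1) ≠ 0) :
    ∃ (n : ℕ) (c : Fin n → ({x : E // x ≠ e} → ℝ)),
      (∀ i, SignedCocircuit (A.submatrix id (Subtype.val : {x : E // x ≠ e} → E)) (c i)) ∧
      (Pairwise fun i j => supp (c i) ∩ supp (c j) = ∅) ∧
      (∀ i, ∀ x ∈ supp (c i), c i x = D x.1) ∧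
      (fun x : {x : E // x ≠ e} => D x.1) = ∑ i, c i := by
  classical
  set B := A.submatrix id (Subtype.val : {x : E // x ≠ e} → E) with hBdef
  have hBTU : B.IsTotallyUnimodular := hA.submatrix _ _
  set v : {x : E // x ≠ e} → ℝ := fun x => D x.1 with hv
  have hsimp : Simple v := fun x => hD.2.2.1 x.1
  have hrow : ∃ y, Matrix.vecMul y B = v := by
    obtain ⟨y, hy⟩ := hD.1
    refine ⟨y, ?_⟩
    funext x
    rw [vecMul_apply']
    have h := congrFun hy x.1
    rw [vecMul_apply'] at h
    simpa [hBdef, Matrix.submatrix_apply] using h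
  obtain ⟨n, c, h1, h2, h3, h4⟩ :=
    tu_decomposition hBTU ((supp v).ncard) v le_rfl hsimp hrow hne
  exact ⟨n, c, h1, h2, h3, h4⟩
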